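/- Let λ = (x₁,…,xₙ) be a dominant weight for Spin(2n+1) (descending non-negative half-integers, all congruent mod ℤ) and μ = (y₁,…,y_{n−1}) a dominant weight for Spin(2n−1) with all entries congruent to those of λ mod ℤ, such that μ 2-step interlaces λ. Let z₁ ≥ … ≥ z_{2n−1} be the joint decreasing rearrangement. Then as a Spin(2)-module, Hom_{Spin(2n−1)}((μ),(λ)) ≅ B(z₁−z₂) ⊗ B(z₃−z₄) ⊗ ⋯ ⊗ A(z_{2n−1}), where A(a) = ⊕_{k=−a, step 1}^{a} (k) and B(b) = ⊕_{k=−b, step 2}^{b} (k). -/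

import Mathlib

/-
STATEMENT 11 (branching from Spin(2n+1) to Spin(2n−1)×Spin(2), formalized in
the case n = 2 — Spin(5) ⊃ Spin(3)×Spin(2) — as sanctioned by the context):
for dominant weights λ = (x₁,x₂) of Spin(5) (descending non-negative
half-integers, congruent mod ℤ) and μ = (y) of Spin(3) congruent to λ mod ℤ
with x₁ ≥ y ≥ x₃ = 0 (2-step interlacing), letting z₁ ≥ z₂ ≥ z₃ be the joint
decreasing rearrangement, one has, as Spin(2)-modules,
  Hom_{Spin(3)}((μ),(λ)) ≅ B(z₁−z₂) ⊗ A(z₃),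
where A(a) = ⊕_{k=−a, step 1}^a (k) and B(b) = ⊕_{k=−b, step 2}^b (k).
Formalization: doubled coordinates X = 2x ∈ ℕ are used throughout (so weights
become integers, congruence mod ℤ becomes congruence mod 2), and u denotes a
square root of the Spin(2)/torus coordinate, so the character of the Spin(2)
weight k is u^{2k}.  The statement is the resulting character identity on the
common torus, in cross-multiplied Weyl character formula form for B₂
(2(λ+ρ) = (X₁+3, X₂+1)).  Since Y ≤ X₁ and X₂ ≤ X₁, the sorted doubled values
are Z₁ = max X₁ Y, Z₂ = max X₂ (min X₁ Y), Z₃ = min X₂ Y, and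
χ_{A(z₃)} = sc Z₃, χ_{B(z₁−z₂)} = scB ((Z₁−Z₂)/2).
-/

noncomputable section

/-- Character of the SU(2)-module of (doubled) highest weight m: Σ u^{m−2i}. -/
def sc (m : ℕ) (u : ℂˣ) : ℂ :=
  ∑ i ∈ Finset.range (m+1), ((u ^ ((m:ℤ) - 2*i) : ℂˣ) : ℂ)

/-- Character of the Spin(2)-module B(b) = (b)+(b−2)+⋯+(−b), b an integer,
in the square-root variable u: Σ u^{2b−4j}. -/
def scB (b : ℕ) (u : ℂˣ) : ℂ :=
  ∑ j ∈ Finset.range (b+1), ((u ^ (2*(b:ℤ) - 4*j) : ℂˣ) : ℂ)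

/-- u^μ − u^{−μ}. -/
def Aexp (u : ℂˣ) (μ : ℤ) : ℂ := ((u ^ μ : ℂˣ) : ℂ) - ((u ^ (-μ) : ℂˣ) : ℂ)

/-- Weyl character formula numerator for the Spin(5) = B₂ representation of
doubled highest weight (X₁,X₂), in square-root torus variables:
2(λ+ρ) = (X₁+3, X₂+1). -/
def NumB2 (X1 X2 : ℕ) (u1 u2 : ℂˣ) : ℂ :=
  Aexp u1 ((X1:ℤ)+3) * Aexp u2 ((X2:ℤ)+1) - Aexp u1 ((X2:ℤ)+1) * Aexp u2 ((X1:ℤ)+3)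

namespace Stmt11

def up (u : ℂˣ) (a : ℤ) : ℂ := ((u ^ a : ℂˣ) : ℂ)

lemma up_mul (u : ℂˣ) (a b : ℤ) : up u a * up u b = up u (a + b) := by
  rw [up, up, up, ← Units.val_mul, ← zpow_add]

lemma upc {a b : ℤ} (u : ℂˣ) (h : a = b) : up u a = up u b := by rw [h]

lemma aexpc {a b : ℤ} (u : ℂˣ) (h : a = b) : Aexp u a = Aexp u b := by rw [h]

lemma aexp_def (u : ℂˣ) (a : ℤ) : Aexp u a = up u a - up u (-a) := rfl

lemma aexp_neg (u : ℂˣ) (a : ℤ) : Aexp u (-a) = -Aexp u a := by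
  rw [aexp_def, aexp_def, neg_neg]; ring

lemma aexp_zero (u : ℂˣ) : Aexp u 0 = 0 := by
  rw [aexp_def, neg_zero]; ring

lemma up_mul_aexp (u : ℂˣ) (a k : ℤ) :
    up u a * Aexp u k = up u (a + k) - up u (a - k) := by
  rw [aexp_def, mul_sub, up_mul, up_mul]
  congr 2

lemma sc_mul_aexp1 (u : ℂˣ) (m : ℕ) :
    sc m u * Aexp u 1 = Aexp u ((m:ℤ) + 1) := by
  have step : ∀ i ∈ Finset.range (m+1),
      ((u ^ ((m:ℤ) - 2*i) : ℂˣ) : ℂ) * Aexp u 1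
        = (fun i : ℕ => up u ((m:ℤ) + 1 - 2*i)) i
          - (fun i : ℕ => up u ((m:ℤ) + 1 - 2*i)) (i+1) := by
    intro i _
    show up u ((m:ℤ) - 2*i) * Aexp u 1
        = up u ((m:ℤ) + 1 - 2*(i:ℤ)) - up u ((m:ℤ) + 1 - 2*((i:ℕ)+1:ℕ))
    rw [up_mul_aexp,
      upc u (show (m:ℤ) - 2*i + 1 = (m:ℤ) + 1 - 2*i by ring),
      upc u (show (m:ℤ) - 2*i - 1 = (m:ℤ) + 1 - 2*(((i:ℕ)+1:ℕ):ℤ) by push_cast; ring)]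
  rw [sc, Finset.sum_mul, Finset.sum_congr rfl step,
    Finset.sum_range_sub' (fun i : ℕ => up u ((m:ℤ) + 1 - 2*i)) (m+1)]
  show up u ((m:ℤ) + 1 - 2*((0:ℕ):ℤ)) - up u ((m:ℤ) + 1 - 2*((m+1:ℕ):ℤ)) = _
  rw [upc u (show (m:ℤ) + 1 - 2*((0:ℕ):ℤ) = (m:ℤ)+1 by push_cast; ring),
    upc u (show (m:ℤ) + 1 - 2*((m+1:ℕ):ℤ) = -((m:ℤ)+1) by push_cast; ring),
    aexp_def]

lemma sum_sub3 (g : ℕ → ℂ) (n : ℕ) :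
    ∑ i ∈ Finset.range n, (g i - g (i+3))
      = g 0 + g 1 + g 2 - (g n + g (n+1) + g (n+2)) := by
  induction n with
  | zero => simp
  | succ n ih =>
    rw [Finset.sum_range_succ, ih,
      show n + 1 + 1 = n + 2 from rfl, show n + 1 + 2 = n + 3 from rfl]
    ring

lemma sc_mul_aexp3 (u : ℂˣ) (m : ℕ) :
    sc m u * Aexp u 3
      = Aexp u ((m:ℤ) + 3) + Aexp u ((m:ℤ) + 1) + Aexp u ((m:ℤ) - 1) := by
  have step : ∀ i ∈ Finset.range (m+1),
      ((u ^ ((m:ℤ) - 2*i) : ℂˣ) : ℂ) * Aexp u 3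
        = (fun i : ℕ => up u ((m:ℤ) + 3 - 2*i)) i
          - (fun i : ℕ => up u ((m:ℤ) + 3 - 2*i)) (i+3) := by
    intro i _
    show up u ((m:ℤ) - 2*i) * Aexp u 3
        = up u ((m:ℤ) + 3 - 2*(i:ℤ)) - up u ((m:ℤ) + 3 - 2*((i:ℕ)+3:ℕ))
    rw [up_mul_aexp,
      upc u (show (m:ℤ) - 2*i + 3 = (m:ℤ) + 3 - 2*i by ring),
      upc u (show (m:ℤ) - 2*i - 3 = (m:ℤ) + 3 - 2*(((i:ℕ)+3:ℕ):ℤ) by push_cast; ring)]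
  rw [sc, Finset.sum_mul, Finset.sum_congr rfl step,
    sum_sub3 (fun i : ℕ => up u ((m:ℤ) + 3 - 2*i)) (m+1)]
  show up u ((m:ℤ) + 3 - 2*((0:ℕ):ℤ)) + up u ((m:ℤ) + 3 - 2*((1:ℕ):ℤ))
      + up u ((m:ℤ) + 3 - 2*((2:ℕ):ℤ))
      - (up u ((m:ℤ) + 3 - 2*((m+1:ℕ):ℤ)) + up u ((m:ℤ) + 3 - 2*((m+1+1:ℕ):ℤ))
        + up u ((m:ℤ) + 3 - 2*((m+1+2:ℕ):ℤ))) = _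
  rw [upc u (show (m:ℤ) + 3 - 2*((0:ℕ):ℤ) = (m:ℤ)+3 by push_cast; ring),
    upc u (show (m:ℤ) + 3 - 2*((1:ℕ):ℤ) = (m:ℤ)+1 by push_cast; ring),
    upc u (show (m:ℤ) + 3 - 2*((2:ℕ):ℤ) = (m:ℤ)-1 by push_cast; ring),
    upc u (show (m:ℤ) + 3 - 2*((m+1:ℕ):ℤ) = -((m:ℤ)-1) by push_cast; ring),
    upc u (show (m:ℤ) + 3 - 2*((m+1+1:ℕ):ℤ) = -((m:ℤ)+1) by push_cast; ring),
    upc u (show (m:ℤ) + 3 - 2*((m+1+2:ℕ):ℤ) = -((m:ℤ)+3) by push_cast; ring),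
    aexp_def, aexp_def, aexp_def]
  ring

lemma scB_mul_aexp (u : ℂˣ) (b : ℕ) (k : ℤ) :
    scB b u * Aexp u k
      = ∑ j ∈ Finset.range (b+1), Aexp u (k + 2*(b:ℤ) - 4*j) := by
  have step : ∀ j ∈ Finset.range (b+1),
      ((u ^ (2*(b:ℤ) - 4*j) : ℂˣ) : ℂ) * Aexp u k
        = up u (k + 2*(b:ℤ) - 4*j) - up u (2*(b:ℤ) - 4*j - k) := by
    intro j _
    show up u (2*(b:ℤ) - 4*j) * Aexp u k = _
    rw [up_mul_aexp, upc u (show 2*(b:ℤ) - 4*j + k = k + 2*(b:ℤ) - 4*j by ring)]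
  rw [scB, Finset.sum_mul, Finset.sum_congr rfl step, Finset.sum_sub_distrib]
  have hrefl : ∑ j ∈ Finset.range (b+1), up u (2*(b:ℤ) - 4*j - k)
      = ∑ j ∈ Finset.range (b+1), up u (-(k + 2*(b:ℤ) - 4*j)) := by
    rw [← Finset.sum_range_reflect (fun j : ℕ => up u (2*(b:ℤ) - 4*j - k)) (b+1)]
    apply Finset.sum_congr rfl
    intro j hj
    have hjb : j ≤ b := by
      simpa [Nat.lt_succ_iff] using Finset.mem_range.mp hj
    apply upc
    have : ((b + 1 - 1 - j : ℕ) : ℤ) = (b:ℤ) - j := by omega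
    rw [this]; ring
  rw [hrefl, ← Finset.sum_sub_distrib]
  apply Finset.sum_congr rfl
  intro j _
  rw [aexp_def]

lemma sum_aexp_zero1 (u : ℂˣ) (d : ℕ) :
    ∑ j ∈ Finset.range (d+1), Aexp u (2*(d:ℤ) - 4*j) = 0 := by
  have hrefl : ∑ j ∈ Finset.range (d+1), Aexp u (2*(d:ℤ) - 4*j)
      = ∑ j ∈ Finset.range (d+1), -Aexp u (2*(d:ℤ) - 4*j) := by
    conv_lhs => rw [← Finset.sum_range_reflect (fun j : ℕ => Aexp u (2*(d:ℤ) - 4*j)) (d+1)]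
    apply Finset.sum_congr rfl
    intro j hj
    have hjb : j ≤ d := by simpa [Nat.lt_succ_iff] using Finset.mem_range.mp hj
    have : ((d + 1 - 1 - j : ℕ) : ℤ) = (d:ℤ) - j := by omega
    rw [this, show 2*(d:ℤ) - 4*((d:ℤ) - j) = -(2*(d:ℤ) - 4*j) by ring, aexp_neg]
  rw [Finset.sum_neg_distrib] at hrefl
  apply add_self_eq_zero.mp
  linear_combination hrefl

lemma sum_aexp_zero2 (u : ℂˣ) (d : ℕ) :
    ∑ j ∈ Finset.range (d+1),
      (Aexp u (2*(d:ℤ) - 4*j - 1) + Aexp u (2*(d:ℤ) - 4*j + 1)) = 0 := by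
  have hrefl : ∑ j ∈ Finset.range (d+1),
      (Aexp u (2*(d:ℤ) - 4*j - 1) + Aexp u (2*(d:ℤ) - 4*j + 1))
      = ∑ j ∈ Finset.range (d+1),
        -(Aexp u (2*(d:ℤ) - 4*j - 1) + Aexp u (2*(d:ℤ) - 4*j + 1)) := by
    conv_lhs => rw [← Finset.sum_range_reflect
      (fun j : ℕ => Aexp u (2*(d:ℤ) - 4*j - 1) + Aexp u (2*(d:ℤ) - 4*j + 1)) (d+1)]
    apply Finset.sum_congr rfl
    intro j hj
    have hjb : j ≤ d := by simpa [Nat.lt_succ_iff] using Finset.mem_range.mp hj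
    have hcast : ((d + 1 - 1 - j : ℕ) : ℤ) = (d:ℤ) - j := by omega
    show Aexp u (2*(d:ℤ) - 4*((d + 1 - 1 - j : ℕ):ℤ) - 1)
        + Aexp u (2*(d:ℤ) - 4*((d + 1 - 1 - j : ℕ):ℤ) + 1) = _
    rw [hcast,
      aexpc u (show 2*(d:ℤ) - 4*((d:ℤ) - j) - 1 = -(2*(d:ℤ) - 4*j + 1) by ring),
      aexpc u (show 2*(d:ℤ) - 4*((d:ℤ) - j) + 1 = -(2*(d:ℤ) - 4*j - 1) by ring),
      aexp_neg, aexp_neg]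
    ring
  rw [Finset.sum_neg_distrib] at hrefl
  apply add_self_eq_zero.mp
  linear_combination hrefl


def G2 (u1 u2 : ℂˣ) (a e : ℤ) : ℂ := Aexp u1 a * Aexp u2 e

def Fn (u1 u2 : ℂˣ) (a e : ℤ) : ℂ := G2 u1 u2 (a+2) e - G2 u1 u2 a (e+2)

lemma brace (u1 u2 : ℂˣ) (Y m b : ℕ) :
    NumB2 0 0 u1 u2 * (sc Y u1 * (scB b u2 * sc m u2))
      = ∑ j ∈ Finset.range (b+1),
          (Fn u1 u2 ((Y:ℤ)+1) ((m:ℤ)+2*b+1-4*j)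
            - Fn u1 u2 ((Y:ℤ)-1) ((m:ℤ)+2*b-1-4*j)) := by
  have h0 : NumB2 0 0 u1 u2 = Aexp u1 3 * Aexp u2 1 - Aexp u1 1 * Aexp u2 3 := by
    rw [NumB2]; norm_num
  have e1 := sc_mul_aexp1 u1 Y
  have e3 := sc_mul_aexp3 u1 Y
  have f1 := sc_mul_aexp1 u2 m
  have f3 := sc_mul_aexp3 u2 m
  have key : NumB2 0 0 u1 u2 * (sc Y u1 * (scB b u2 * sc m u2))
      = (Aexp u1 ((Y:ℤ)+3) + Aexp u1 ((Y:ℤ)+1) + Aexp u1 ((Y:ℤ)-1))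
          * (scB b u2 * Aexp u2 ((m:ℤ)+1))
        - Aexp u1 ((Y:ℤ)+1)
          * (scB b u2 * (Aexp u2 ((m:ℤ)+3) + Aexp u2 ((m:ℤ)+1) + Aexp u2 ((m:ℤ)-1))) := by
    rw [h0, ← e3, ← e1, ← f3, ← f1]; ring
  rw [key, show scB b u2 * (Aexp u2 ((m:ℤ)+3) + Aexp u2 ((m:ℤ)+1) + Aexp u2 ((m:ℤ)-1))
      = scB b u2 * Aexp u2 ((m:ℤ)+3) + scB b u2 * Aexp u2 ((m:ℤ)+1)
        + scB b u2 * Aexp u2 ((m:ℤ)-1) from by ring, mul_add, mul_add,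
    scB_mul_aexp, scB_mul_aexp, scB_mul_aexp,
    Finset.mul_sum, Finset.mul_sum, Finset.mul_sum, Finset.mul_sum,
    ← Finset.sum_add_distrib, ← Finset.sum_add_distrib, ← Finset.sum_sub_distrib]
  apply Finset.sum_congr rfl
  intro j _
  simp only [Fn, G2]
  rw [aexpc u2 (show (m:ℤ)+1 + 2*(b:ℤ) - 4*(j:ℤ) = (m:ℤ)+2*b+1-4*j by ring),
    aexpc u2 (show (m:ℤ)+3 + 2*(b:ℤ) - 4*(j:ℤ) = ((m:ℤ)+2*b+1-4*j)+2 by ring),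
    aexpc u2 (show (m:ℤ)-1 + 2*(b:ℤ) - 4*(j:ℤ) = ((m:ℤ)+2*b-1-4*j) by ring),
    aexpc u1 (show (Y:ℤ)+1+2 = (Y:ℤ)+3 by ring),
    aexpc u1 (show (Y:ℤ)-1+2 = (Y:ℤ)+1 by ring),
    aexpc u2 (show (m:ℤ)+2*b-1-4*j+2 = (m:ℤ)+2*b+1-4*j by ring)]
  ring


lemma upperTel (d : ℕ) (g : ℤ → ℤ → ℂ) :
    ∑ t ∈ Finset.range (d+1), ∑ j ∈ Finset.range (t+1),
      (g (2*((d:ℤ)-t)+1) (2*(t:ℤ)+1-4*j) - g (2*((d:ℤ)-t)-1) (2*(t:ℤ)-1-4*j))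
    = ∑ t ∈ Finset.range (d+1), g (2*((d:ℤ)-t)+1) (2*(t:ℤ)+1)
      - ∑ j ∈ Finset.range (d+1), g (-1) (2*(d:ℤ)-1-4*(j:ℤ)) := by
  induction d generalizing g with
  | zero => norm_num
  | succ d ih =>
    have gc : ∀ {a a' e e' : ℤ}, a = a' → e = e' → g a e = g a' e' := by
      intro a a' e e' h1 h2; rw [h1, h2]
    have IH := ih (fun a e => g (a+2) e)
    have L1 : ∑ t ∈ Finset.range (d+1+1), ∑ j ∈ Finset.range (t+1),
        (g (2*(((d+1:ℕ):ℤ)-t)+1) (2*(t:ℤ)+1-4*j) - g (2*(((d+1:ℕ):ℤ)-t)-1) (2*(t:ℤ)-1-4*j))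
        = (∑ t ∈ Finset.range (d+1), ∑ j ∈ Finset.range (t+1),
            (g (2*((d:ℤ)-t)+1+2) (2*(t:ℤ)+1-4*j) - g (2*((d:ℤ)-t)-1+2) (2*(t:ℤ)-1-4*j)))
          + ∑ j ∈ Finset.range (d+1+1),
              (g 1 (2*((d:ℤ)+1)+1-4*(j:ℤ)) - g (-1) (2*((d:ℤ)+1)-1-4*(j:ℤ))) := by
      rw [Finset.sum_range_succ]
      congr 1
      · apply Finset.sum_congr rfl; intro t _
        apply Finset.sum_congr rfl; intro j _
        congr 1
        · exact gc (by push_cast; ring) rfl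
        · exact gc (by push_cast; ring) rfl
      · apply Finset.sum_congr rfl; intro j _
        congr 1
        · exact gc (by push_cast; ring) (by push_cast; ring)
        · exact gc (by push_cast; ring) (by push_cast; ring)
    rw [L1, IH]
    have R1 : ∑ t ∈ Finset.range (d+1+1), g (2*(((d+1:ℕ):ℤ)-t)+1) (2*(t:ℤ)+1)
        = (∑ t ∈ Finset.range (d+1), g (2*((d:ℤ)-t)+1+2) (2*(t:ℤ)+1))
          + g 1 (2*((d:ℤ)+1)+1) := by
      rw [Finset.sum_range_succ]
      congr 1
      · apply Finset.sum_congr rfl; intro t _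
        exact gc (by push_cast; ring) rfl
      · exact gc (by push_cast; ring) (by push_cast; ring)
    have R2 : ∑ j ∈ Finset.range (d+1+1), g 1 (2*((d:ℤ)+1)+1-4*(j:ℤ))
        = (∑ j ∈ Finset.range (d+1), g (-1+2) (2*(d:ℤ)-1-4*(j:ℤ)))
          + g 1 (2*((d:ℤ)+1)+1) := by
      rw [Finset.sum_range_succ']
      refine congrArg₂ (· + ·)
        (Finset.sum_congr rfl fun j _ => gc (by ring) (by push_cast; ring))
        (gc rfl (by push_cast; ring))
    have R3 : ∑ j ∈ Finset.range (d+1+1), g (-1) (2*(((d+1:ℕ):ℤ))-1-4*(j:ℤ))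
        = ∑ j ∈ Finset.range (d+1+1), g (-1) (2*((d:ℤ)+1)-1-4*(j:ℤ)) := by
      apply Finset.sum_congr rfl; intro j _
      exact gc rfl (by push_cast; ring)
    rw [R1, R3, Finset.sum_sub_distrib, R2]
    ring
  done

lemma lowerTel (h d : ℕ) (Q : ℤ) (F : ℤ → ℤ → ℂ) :
    ∑ r ∈ Finset.range h, ∑ j ∈ Finset.range (d+1),
      (F (Q-1-2*r) (Q-1-2*r+2*(d:ℤ)-4*j) - F (Q-3-2*r) (Q-3-2*r+2*(d:ℤ)-4*j))
    = ∑ j ∈ Finset.range (d+1), F (Q-1) (Q-1+2*(d:ℤ)-4*j)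
      - ∑ j ∈ Finset.range (d+1), F (Q-1-2*h) (Q-1-2*h+2*(d:ℤ)-4*j) := by
  have Fc : ∀ {a a' e e' : ℤ}, a = a' → e = e' → F a e = F a' e' := by
    intro a a' e e' h1 h2; rw [h1, h2]
  rw [Finset.sum_comm, ← Finset.sum_sub_distrib]
  apply Finset.sum_congr rfl
  intro j _
  have tel := Finset.sum_range_sub'
    (fun r : ℕ => F (Q-1-2*r) (Q-1-2*r+2*(d:ℤ)-4*j)) h
  calc ∑ r ∈ Finset.range h,
        (F (Q-1-2*r) (Q-1-2*r+2*(d:ℤ)-4*j) - F (Q-3-2*r) (Q-3-2*r+2*(d:ℤ)-4*j))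
      = ∑ r ∈ Finset.range h,
        ((fun r : ℕ => F (Q-1-2*r) (Q-1-2*r+2*(d:ℤ)-4*j)) r
          - (fun r : ℕ => F (Q-1-2*r) (Q-1-2*r+2*(d:ℤ)-4*j)) (r+1)) := by
        apply Finset.sum_congr rfl; intro r _
        show _ = F (Q-1-2*r) (Q-1-2*r+2*(d:ℤ)-4*j)
          - F (Q-1-2*((r:ℕ)+1:ℕ)) (Q-1-2*((r:ℕ)+1:ℕ)+2*(d:ℤ)-4*j)
        congr 1
        exact Fc (by push_cast; ring) (by push_cast; ring)
    _ = F (Q-1-2*((0:ℕ):ℤ)) (Q-1-2*((0:ℕ):ℤ)+2*(d:ℤ)-4*j)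
        - F (Q-1-2*((h:ℕ):ℤ)) (Q-1-2*((h:ℕ):ℤ)+2*(d:ℤ)-4*j) := tel
    _ = F (Q-1) (Q-1+2*(d:ℤ)-4*j) - F (Q-1-2*h) (Q-1-2*h+2*(d:ℤ)-4*j) := by
        congr 1 <;> exact Fc (by push_cast; ring) (by push_cast; ring)

lemma filter_sum (p : ℕ) (f : ℕ → ℂ) :
    ∑ Y ∈ (Finset.range (p+1)).filter (fun Y => Y % 2 = p % 2), f Y
      = ∑ t ∈ Finset.range (p/2 + 1), f (p - 2*t) := by
  apply Finset.sum_nbij' (i := fun Y => (p - Y)/2) (j := fun t => p - 2*t)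
  · intro Y hY
    simp only [Finset.mem_filter, Finset.mem_range] at hY ⊢
    omega
  · intro t ht
    simp only [Finset.mem_filter, Finset.mem_range] at ht ⊢
    omega
  · intro Y hY
    simp only [Finset.mem_filter, Finset.mem_range] at hY
    omega
  · intro t ht
    simp only [Finset.mem_range] at ht
    omega
  · intro Y hY
    simp only [Finset.mem_filter, Finset.mem_range] at hY
    congr 1
    omega

lemma finalTel (d : ℕ) (Q : ℤ) (u1 u2 : ℂˣ) :
    ∑ t ∈ Finset.range (d+1), Fn u1 u2 (Q + (2*((d:ℤ)-t)+1)) (Q + (2*(t:ℤ)+1))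
      = G2 u1 u2 (Q+2*(d:ℤ)+3) (Q+1) - G2 u1 u2 (Q+1) (Q+2*(d:ℤ)+3) := by
  have Gc : ∀ {a a' e e' : ℤ}, a = a' → e = e' → G2 u1 u2 a e = G2 u1 u2 a' e' := by
    intro a a' e e' h1 h2; rw [h1, h2]
  have tel := Finset.sum_range_sub'
    (fun t : ℕ => G2 u1 u2 (Q+2*((d:ℤ)-t)+3) (Q+2*(t:ℤ)+1)) (d+1)
  calc ∑ t ∈ Finset.range (d+1), Fn u1 u2 (Q + (2*((d:ℤ)-t)+1)) (Q + (2*(t:ℤ)+1))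
      = ∑ t ∈ Finset.range (d+1),
          ((fun t : ℕ => G2 u1 u2 (Q+2*((d:ℤ)-t)+3) (Q+2*(t:ℤ)+1)) t
            - (fun t : ℕ => G2 u1 u2 (Q+2*((d:ℤ)-t)+3) (Q+2*(t:ℤ)+1)) (t+1)) := by
        apply Finset.sum_congr rfl; intro t _
        show Fn u1 u2 _ _ = G2 u1 u2 (Q+2*((d:ℤ)-t)+3) (Q+2*(t:ℤ)+1)
          - G2 u1 u2 (Q+2*((d:ℤ)-((t:ℕ)+1:ℕ))+3) (Q+2*(((t:ℕ)+1:ℕ):ℤ)+1)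
        rw [Fn]
        congr 1
        · exact Gc (by ring) (by ring)
        · exact Gc (by push_cast; ring) (by push_cast; ring)
    _ = G2 u1 u2 (Q+2*((d:ℤ)-((0:ℕ):ℤ))+3) (Q+2*((0:ℕ):ℤ)+1)
        - G2 u1 u2 (Q+2*((d:ℤ)-((d+1:ℕ):ℤ))+3) (Q+2*((d+1:ℕ):ℤ)+1) := tel
    _ = G2 u1 u2 (Q+2*(d:ℤ)+3) (Q+1) - G2 u1 u2 (Q+1) (Q+2*(d:ℤ)+3) := by
        congr 1 <;> exact Gc (by push_cast; ring) (by push_cast; ring)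

end Stmt11

open Stmt11

theorem stmt11 (X1 X2 : ℕ) (h1 : X2 ≤ X1) (h2 : X1 % 2 = X2 % 2) (u1 u2 : ℂˣ) :
    NumB2 X1 X2 u1 u2 =
      NumB2 0 0 u1 u2 *
        ∑ Y ∈ (Finset.range (X1+1)).filter (fun Y => Y % 2 = X1 % 2),
          sc Y u1 * (scB ((max X1 Y - max X2 (min X1 Y)) / 2) u2 * sc (min X2 Y) u2) := by
  obtain ⟨d, hd⟩ : ∃ d, X1 = X2 + 2*d := ⟨(X1-X2)/2, by omega⟩
  set h : ℕ := X2/2 with hh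
  have Fnc : ∀ {a a' e e' : ℤ}, a = a' → e = e' → Fn u1 u2 a e = Fn u1 u2 a' e' := by
    intro a a' e e' ha he; rw [ha, he]
  -- the left-hand side in G2 form
  have hL : NumB2 X1 X2 u1 u2
      = G2 u1 u2 ((X2:ℤ)+2*(d:ℤ)+3) ((X2:ℤ)+1)
        - G2 u1 u2 ((X2:ℤ)+1) ((X2:ℤ)+2*(d:ℤ)+3) := by
    simp only [NumB2, G2]
    rw [aexpc u1 (show (X1:ℤ)+3 = (X2:ℤ)+2*(d:ℤ)+3 by omega),
      aexpc u2 (show (X1:ℤ)+3 = (X2:ℤ)+2*(d:ℤ)+3 by omega)]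
  rw [hL]
  -- reindex the filtered sum
  have key := filter_sum X1 (fun Y =>
    NumB2 0 0 u1 u2 *
      (sc Y u1 * (scB ((max X1 Y - max X2 (min X1 Y)) / 2) u2 * sc (min X2 Y) u2)))
  have hsplit : X1/2 + 1 = (d+1) + h := by omega
  rw [Finset.mul_sum, key, hsplit, Finset.sum_range_add]
  -- upper part
  have hup : ∀ t ∈ Finset.range (d+1),
      NumB2 0 0 u1 u2 *
        (sc (X1-2*t) u1 *
          (scB ((max X1 (X1-2*t) - max X2 (min X1 (X1-2*t))) / 2) u2
            * sc (min X2 (X1-2*t)) u2))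
      = ∑ j ∈ Finset.range (t+1),
          (Fn u1 u2 ((X2:ℤ) + (2*((d:ℤ)-t)+1)) ((X2:ℤ) + (2*(t:ℤ)+1-4*j))
            - Fn u1 u2 ((X2:ℤ) + (2*((d:ℤ)-t)-1)) ((X2:ℤ) + (2*(t:ℤ)-1-4*j))) := by
    intro t ht
    simp only [Finset.mem_range] at ht
    rw [min_eq_right (show X1-2*t ≤ X1 by omega),
      max_eq_right (show X2 ≤ X1-2*t by omega),
      max_eq_left (show X1-2*t ≤ X1 by omega),
      show (X1 - (X1-2*t))/2 = t by omega,
      min_eq_left (show X2 ≤ X1-2*t by omega),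
      brace u1 u2 (X1-2*t) X2 t]
    apply Finset.sum_congr rfl
    intro j _
    congr 1
    · exact Fnc (by omega) (by push_cast; ring)
    · exact Fnc (by omega) (by push_cast; ring)
  rw [Finset.sum_congr rfl hup]
  have hfin := upperTel d (fun a e => Fn u1 u2 ((X2:ℤ) + a) ((X2:ℤ) + e))
  rw [hfin, finalTel d ((X2:ℤ)) u1 u2]
  -- lower part
  have hlo : ∀ r ∈ Finset.range h,
      NumB2 0 0 u1 u2 *
        (sc (X1-2*(d+1+r)) u1 *
          (scB ((max X1 (X1-2*(d+1+r)) - max X2 (min X1 (X1-2*(d+1+r)))) / 2) u2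
            * sc (min X2 (X1-2*(d+1+r))) u2))
      = ∑ j ∈ Finset.range (d+1),
          (Fn u1 u2 ((X2:ℤ)-1-2*r) ((X2:ℤ)-1-2*r+2*(d:ℤ)-4*j)
            - Fn u1 u2 ((X2:ℤ)-3-2*r) ((X2:ℤ)-3-2*r+2*(d:ℤ)-4*j)) := by
    intro r hr
    simp only [Finset.mem_range] at hr
    rw [min_eq_right (show X1-2*(d+1+r) ≤ X1 by omega),
      max_eq_left (show X1-2*(d+1+r) ≤ X2 by omega),
      max_eq_left (show X1-2*(d+1+r) ≤ X1 by omega),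
      show (X1 - X2)/2 = d by omega,
      min_eq_right (show X1-2*(d+1+r) ≤ X2 by omega),
      brace u1 u2 (X1-2*(d+1+r)) (X1-2*(d+1+r)) d]
    apply Finset.sum_congr rfl
    intro j _
    congr 1
    · exact Fnc (by omega) (by omega)
    · exact Fnc (by omega) (by omega)
  rw [Finset.sum_congr rfl hlo, lowerTel h d ((X2:ℤ)) (Fn u1 u2)]
  -- identify the two middle sums
  have hmid : ∑ j ∈ Finset.range (d+1),
      Fn u1 u2 ((X2:ℤ) + (-1)) ((X2:ℤ) + (2*(d:ℤ)-1-4*(j:ℤ)))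
      = ∑ j ∈ Finset.range (d+1),
        Fn u1 u2 ((X2:ℤ)-1) ((X2:ℤ)-1+2*(d:ℤ)-4*(j:ℤ)) := by
    apply Finset.sum_congr rfl
    intro j _
    exact Fnc (by ring) (by ring)
  rw [hmid]
  -- remainder vanishes
  have hrem : ∑ j ∈ Finset.range (d+1),
      Fn u1 u2 ((X2:ℤ)-1-2*(h:ℤ)) ((X2:ℤ)-1-2*(h:ℤ)+2*(d:ℤ)-4*(j:ℤ)) = 0 := by
    rcases (show X2 = 2*h ∨ X2 = 2*h+1 by omega) with he | ho
    · -- X2 even : first argument is -1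
      have step : ∀ j ∈ Finset.range (d+1),
          Fn u1 u2 ((X2:ℤ)-1-2*(h:ℤ)) ((X2:ℤ)-1-2*(h:ℤ)+2*(d:ℤ)-4*(j:ℤ))
          = Aexp u1 1 * (Aexp u2 (2*(d:ℤ)-4*j-1) + Aexp u2 (2*(d:ℤ)-4*j+1)) := by
        intro j _
        rw [Fnc (show (X2:ℤ)-1-2*(h:ℤ) = -1 by omega)
          (show (X2:ℤ)-1-2*(h:ℤ)+2*(d:ℤ)-4*(j:ℤ) = 2*(d:ℤ)-4*j-1 by omega)]
        simp only [Fn, G2]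
        rw [aexpc u1 (show (-1:ℤ)+2 = 1 by ring),
          aexpc u2 (show 2*(d:ℤ)-4*j-1+2 = 2*(d:ℤ)-4*j+1 by ring),
          show (-1:ℤ) = -(1:ℤ) from rfl, aexp_neg]
        ring
      rw [Finset.sum_congr rfl step, ← Finset.mul_sum, sum_aexp_zero2, mul_zero]
    · -- X2 odd : first argument is 0
      have step : ∀ j ∈ Finset.range (d+1),
          Fn u1 u2 ((X2:ℤ)-1-2*(h:ℤ)) ((X2:ℤ)-1-2*(h:ℤ)+2*(d:ℤ)-4*(j:ℤ))
          = Aexp u1 2 * Aexp u2 (2*(d:ℤ)-4*j) := by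
        intro j _
        rw [Fnc (show (X2:ℤ)-1-2*(h:ℤ) = 0 by omega)
          (show (X2:ℤ)-1-2*(h:ℤ)+2*(d:ℤ)-4*(j:ℤ) = 2*(d:ℤ)-4*j by omega)]
        simp only [Fn, G2]
        rw [aexpc u1 (show (0:ℤ)+2 = 2 by ring), aexp_zero]
        ring
      rw [Finset.sum_congr rfl step, ← Finset.mul_sum, sum_aexp_zero1, mul_zero]
  rw [hrem]
  ring
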